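/- Let n ≥ 3, view S_n as the group of permutations of ℤ/nℤ, and let τ ∈ N_{S_n}(C) be given by τ(x) = dx + r with d ∈ (ℤ/nℤ)^× and r ∈ ℤ/nℤ. Then τ is conjugate in S_n to the permutation τ̃ : x ↦ dx + r', where r' is the smallest nonnegative integer congruent to r modulo gcd(n, d−1). -/

import Mathlib

/-- The `n`-cycle `x ↦ x + 1` on `ℤ/nℤ`, as a permutation. -/
def cyc (n : ℕ) : Equiv.Perm (ZMod n) := Equiv.addLeft (1 : ZMod n)

/-- If `τ ∈ N_{S_n}(C)` is given by `τ(x) = d·x + r` with `d ∈ (ℤ/nℤ)ˣ`, then `τ` is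
conjugate in `S_n` to the permutation `τ̃ : x ↦ d·x + r'`, where `r'` is the smallest
nonnegative integer congruent to `r` modulo `gcd(n, d − 1)`. -/
theorem normalizer_conjugate_reduced_translation
    (n : ℕ) (hn : 3 ≤ n) [NeZero n] (τ : Equiv.Perm (ZMod n))
    (hτ : τ ∈ Subgroup.normalizer ((Subgroup.zpowers (cyc n) : Subgroup (Equiv.Perm (ZMod n))) : Set (Equiv.Perm (ZMod n))))
    (d : (ZMod n)ˣ) (r : ZMod n) (hform : ∀ x : ZMod n, τ x = (d : ZMod n) * x + r) :
    ∃ τ' : Equiv.Perm (ZMod n),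
      (∀ x : ZMod n, τ' x =
        (d : ZMod n) * x + ((r.val % Nat.gcd n ((d : ZMod n) - 1).val : ℕ) : ZMod n)) ∧
      IsConj τ τ' := by
  set a : ℕ := ((d : ZMod n) - 1).val with ha
  set g : ℕ := Nat.gcd n a with hg
  -- gcd as a combination: (g : ZMod n) = (d-1) * y for some y
  have hcomb : (g : ℤ) = n * Nat.gcdA n a + a * Nat.gcdB n a := Nat.gcd_eq_gcd_ab n a
  set y : ZMod n := ((Nat.gcdB n a : ℤ) : ZMod n) with hy
  have hda : ((a : ℕ) : ZMod n) = (d : ZMod n) - 1 := ZMod.natCast_zmod_val _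
  have hgy : (g : ZMod n) = ((d : ZMod n) - 1) * y := by
    have : ((g : ℤ) : ZMod n) = ((n * Nat.gcdA n a + a * Nat.gcdB n a : ℤ) : ZMod n) := by
      rw [← hcomb]
    push_cast at this
    rw [ZMod.natCast_self] at this
    simpa [hda, hy] using this
  set s : ZMod n := y * ((r.val / g : ℕ) : ZMod n) with hs
  have hkey : ((d : ZMod n) - 1) * s = r - ((r.val % g : ℕ) : ZMod n) := by
    have h1 : g * (r.val / g) + r.val % g = r.val := Nat.div_add_mod _ _
    have h2 : ((g * (r.val / g) + r.val % g : ℕ) : ZMod n) = r := by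
      rw [h1, ZMod.natCast_zmod_val]
    push_cast at h2
    rw [hs, ← mul_assoc, ← hgy]
    linear_combination h2
  set σ : Equiv.Perm (ZMod n) := Equiv.addLeft s with hσ
  refine ⟨σ * τ * σ⁻¹, ?_, ?_⟩
  · intro x
    have hσinv : σ⁻¹ x = -s + x := rfl
    simp only [Equiv.Perm.mul_apply, hσinv, hform]
    have : σ ((d : ZMod n) * (-s + x) + r) = s + ((d : ZMod n) * (-s + x) + r) := rfl
    rw [this]
    linear_combination -hkey
  · exact isConj_iff.mpr ⟨σ, rfl⟩
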